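/- Let d ≥ 1, q ∈ ℕ, and z ∈ ℤ^{4^d} with z ≠ 0 and ‖z‖_∞ ≥ 2^{q−1}. Then ‖L_d·z − 𝐿̃_d(z)‖_∞ ≤ (7/4)·(2^d − 1)·ε_q·‖z‖_∞, where ε_q = 2^{1−q}. -/

import Mathlib

/-- Floor division by 2, modeling a one-bit right shift of a two's complement integer. -/
def rr (p : ℤ) : ℤ := ⌊(p : ℚ) / 2⌋

/-- The ZFP forward transform matrix `L`. -/
noncomputable def Lmat : Matrix (Fin 4) (Fin 4) ℝ :=
  (1 / 16 : ℝ) • !![4, 4, 4, 4; 5, 1, -1, -5; -4, 4, 4, -4; -2, 6, -6, 2]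

/-- The lossy forward transform `𝐿̃ : ℤ⁴ → ℤ⁴` of ZFP, executed step by step. -/
def Ltilde (a : Fin 4 → ℤ) : Fin 4 → ℤ :=
  let a1 := a 0
  let a2 := a 1
  let a3 := a 2
  let a4 := a 3
  let a1 := a1 + a4
  let a1 := rr a1
  let a4 := a4 - a1
  let a3 := a3 + a2
  let a3 := rr a3
  let a2 := a2 - a3
  let a1 := a1 + a3
  let a1 := rr a1
  let a3 := a3 - a1
  let a4 := a4 + a2
  let a4 := rr a4
  let a2 := a2 - a4
  let a4 := a4 + rr a2
  let a2 := a2 - rr a4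
  ![a1, a2, a3, a4]

/-- The `d`-fold Kronecker power `L_d = L ⊗ ⋯ ⊗ L`, indexed by tuples in `{0,1,2,3}^d`:
`(L_d)_{v,w} = ∏_j L_{v_j, w_j}`. -/
noncomputable def LmatD (d : ℕ) : Matrix (Fin d → Fin 4) (Fin d → Fin 4) ℝ :=
  fun v w => ∏ j, Lmat (v j) (w j)

/-- Applying `𝐿̃` along dimension `j`: for each fixed choice of the other coordinates,
the 4-vector of entries indexed by the `j`-th coordinate is replaced by its `𝐿̃`-image. -/
def applyAlong {d : ℕ} (j : Fin d) (z : (Fin d → Fin 4) → ℤ) : (Fin d → Fin 4) → ℤ :=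
  fun v => Ltilde (fun t => z (Function.update v j t)) (v j)

/-- The lossy `d`-dimensional forward transform `𝐿̃_d`: apply `𝐿̃` along dimension 1,
then dimension 2, …, then dimension `d`. -/
def LtildeD {d : ℕ} (z : (Fin d → Fin 4) → ℤ) : (Fin d → Fin 4) → ℤ :=
  (List.finRange d).foldl (fun acc j => applyAlong j acc) z

/- ### Auxiliary lemmas -/

lemma rr_key (p : ℤ) : p - 1 ≤ 2 * rr p ∧ 2 * rr p ≤ p := by
  have h1 : (rr p : ℚ) ≤ (p : ℚ) / 2 := Int.floor_le _
  have h2 : (p : ℚ) / 2 - 1 < rr p := Int.sub_one_lt_floor _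
  constructor
  · have h3 : (p : ℚ) - 2 < 2 * rr p := by linarith
    have h4 : p - 2 < 2 * rr p := by exact_mod_cast h3
    omega
  · have h3 : (2 : ℚ) * rr p ≤ p := by linarith
    exact_mod_cast h3

lemma rr_bnd (p : ℤ) : (p : ℝ) / 2 - 1 / 2 ≤ (rr p : ℝ) ∧ (rr p : ℝ) ≤ (p : ℝ) / 2 := by
  obtain ⟨h1, h2⟩ := rr_key p
  constructor
  · have h : ((p : ℤ) : ℝ) - 1 ≤ ((2 * rr p : ℤ) : ℝ) := by exact_mod_cast h1
    push_cast at h; linarith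
  · have h : ((2 * rr p : ℤ) : ℝ) ≤ ((p : ℤ) : ℝ) := by exact_mod_cast h2
    push_cast at h; linarith

lemma lmat_mulVec (w : Fin 4 → ℝ) : Lmat.mulVec w = ![
    (w 0 + w 1 + w 2 + w 3) / 4,
    (5 * w 0 + w 1 - w 2 - 5 * w 3) / 16,
    (-w 0 + w 1 + w 2 - w 3) / 4,
    (-w 0 + 3 * w 1 - 3 * w 2 + w 3) / 8] := by
  funext i
  fin_cases i <;>
    · simp [Lmat, Matrix.mulVec, dotProduct, Fin.sum_univ_four]
      ring

/-- Single 4-vector error bound for the lossy transform. -/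
lemma ltilde_err (a : Fin 4 → ℤ) (i : Fin 4) :
    |Lmat.mulVec (fun t => (a t : ℝ)) i - ((Ltilde a i : ℤ) : ℝ)| ≤ 7 / 4 := by
  have hL : Ltilde a = ![rr (rr (a 0 + a 3) + rr (a 2 + a 1)),
    (a 1 - rr (a 2 + a 1) - rr (a 3 - rr (a 0 + a 3) + (a 1 - rr (a 2 + a 1)))) -
      rr (rr (a 3 - rr (a 0 + a 3) + (a 1 - rr (a 2 + a 1))) +
        rr (a 1 - rr (a 2 + a 1) - rr (a 3 - rr (a 0 + a 3) + (a 1 - rr (a 2 + a 1))))),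
    rr (a 2 + a 1) - rr (rr (a 0 + a 3) + rr (a 2 + a 1)),
    rr (a 3 - rr (a 0 + a 3) + (a 1 - rr (a 2 + a 1))) +
      rr (a 1 - rr (a 2 + a 1) - rr (a 3 - rr (a 0 + a 3) + (a 1 - rr (a 2 + a 1))))] := rfl
  obtain ⟨g1, g1'⟩ := rr_bnd (a 0 + a 3)
  obtain ⟨g3, g3'⟩ := rr_bnd (a 2 + a 1)
  obtain ⟨gc, gc'⟩ := rr_bnd (rr (a 0 + a 3) + rr (a 2 + a 1))
  obtain ⟨g4, g4'⟩ := rr_bnd (a 3 - rr (a 0 + a 3) + (a 1 - rr (a 2 + a 1)))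
  obtain ⟨g5, g5'⟩ := rr_bnd (a 1 - rr (a 2 + a 1) -
    rr (a 3 - rr (a 0 + a 3) + (a 1 - rr (a 2 + a 1))))
  obtain ⟨g6, g6'⟩ := rr_bnd (rr (a 3 - rr (a 0 + a 3) + (a 1 - rr (a 2 + a 1))) +
    rr (a 1 - rr (a 2 + a 1) - rr (a 3 - rr (a 0 + a 3) + (a 1 - rr (a 2 + a 1)))))
  push_cast at g1 g1' g3 g3' gc gc' g4 g4' g5 g5' g6 g6'
  rw [hL, lmat_mulVec]
  fin_cases i
  all_goals simp
  all_goals rw [abs_le]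
  all_goals constructor <;> linarith

lemma lmat_mulVec_bound (w : Fin 4 → ℝ) (M : ℝ) (h : ∀ t, |w t| ≤ M) (i : Fin 4) :
    |Lmat.mulVec w i| ≤ M := by
  have h0 := abs_le.mp (h 0); have h1 := abs_le.mp (h 1)
  have h2 := abs_le.mp (h 2); have h3 := abs_le.mp (h 3)
  have hM : 0 ≤ M := le_trans (abs_nonneg _) (h 0)
  rw [lmat_mulVec]
  fin_cases i
  all_goals simp
  all_goals rw [abs_le]
  all_goals constructor <;> linarith [h0.1, h0.2, h1.1, h1.2, h2.1, h2.2, h3.1, h3.2]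

/-- The exact transform applied along dimension `j`. -/
noncomputable def applyAlongR {d : ℕ} (j : Fin d) (w : (Fin d → Fin 4) → ℝ) :
    (Fin d → Fin 4) → ℝ :=
  fun v => Lmat.mulVec (fun t => w (Function.update v j t)) (v j)

lemma applyAlongR_contract {d : ℕ} (j : Fin d) (w w' : (Fin d → Fin 4) → ℝ) (M : ℝ)
    (h : ∀ v, |w v - w' v| ≤ M) (v : Fin d → Fin 4) :
    |applyAlongR j w v - applyAlongR j w' v| ≤ M := by
  have hdiff : applyAlongR j w v - applyAlongR j w' v =
      Lmat.mulVec (fun t => w (Function.update v j t) - w' (Function.update v j t)) (v j) := by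
    simp [applyAlongR, Matrix.mulVec, dotProduct, mul_sub, Finset.sum_sub_distrib]
  rw [hdiff]
  exact lmat_mulVec_bound _ M (fun t => h _) (v j)

lemma foldl_contract {d : ℕ} (l : List (Fin d)) (w w' : (Fin d → Fin 4) → ℝ) (M : ℝ)
    (h : ∀ v, |w v - w' v| ≤ M) (v : Fin d → Fin 4) :
    |l.foldl (fun acc j => applyAlongR j acc) w v -
      l.foldl (fun acc j => applyAlongR j acc) w' v| ≤ M := by
  induction l generalizing w w' with
  | nil => exact h v
  | cons j l ih =>
    simp only [List.foldl_cons]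
    exact ih _ _ (applyAlongR_contract j w w' M h)

lemma applyAlong_err {d : ℕ} (j : Fin d) (z : (Fin d → Fin 4) → ℤ) (v : Fin d → Fin 4) :
    |applyAlongR j (fun u => (z u : ℝ)) v - ((applyAlong j z v : ℤ) : ℝ)| ≤ 7 / 4 :=
  ltilde_err (fun t => z (Function.update v j t)) (v j)

lemma foldl_err {d : ℕ} (l : List (Fin d)) (z : (Fin d → Fin 4) → ℤ) (v : Fin d → Fin 4) :
    |l.foldl (fun acc j => applyAlongR j acc) (fun u => (z u : ℝ)) v -
      ((l.foldl (fun acc j => applyAlong j acc) z v : ℤ) : ℝ)| ≤ 7 / 4 * l.length := by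
  induction l generalizing z with
  | nil => simp
  | cons j l ih =>
    simp only [List.foldl_cons, List.length_cons]
    have h1 := foldl_contract l (applyAlongR j (fun u => (z u : ℝ)))
      (fun u => ((applyAlong j z u : ℤ) : ℝ)) (7 / 4) (applyAlong_err j z) v
    have h2 := ih (applyAlong j z)
    have h3 := abs_sub_le
      (l.foldl (fun acc j => applyAlongR j acc) (applyAlongR j (fun u => (z u : ℝ))) v)
      (l.foldl (fun acc j => applyAlongR j acc) (fun u => ((applyAlong j z u : ℤ) : ℝ)) v)
      ((l.foldl (fun acc j => applyAlong j acc) (applyAlong j z) v : ℤ) : ℝ)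
    push_cast
    push_cast at h3 h2 h1
    linarith

noncomputable def Kron {d : ℕ} (f : Fin d → Matrix (Fin 4) (Fin 4) ℝ) :
    Matrix (Fin d → Fin 4) (Fin d → Fin 4) ℝ :=
  fun v w => ∏ j, f j (v j) (w j)

lemma kron_step {d : ℕ} (f : Fin d → Matrix (Fin 4) (Fin 4) ℝ) (j : Fin d)
    (w : (Fin d → Fin 4) → ℝ) :
    applyAlongR j ((Kron f).mulVec w) =
      (Kron (Function.update f j (Lmat * f j))).mulVec w := by
  funext v
  simp only [applyAlongR, Kron, Matrix.mulVec, dotProduct]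
  have hprod : ∀ (t : Fin 4) (u : Fin d → Fin 4),
      (∏ i, f i (Function.update v j t i) (u i)) =
        f j t (u j) * ∏ i ∈ Finset.univ.erase j, f i (v i) (u i) := by
    intro t u
    rw [← Finset.mul_prod_erase Finset.univ _ (Finset.mem_univ j)]
    congr 1
    · rw [Function.update_self]
    · exact Finset.prod_congr rfl fun i hi => by
        rw [Function.update_of_ne (Finset.ne_of_mem_erase hi)]
  have hupd : ∀ u : Fin d → Fin 4,
      (∏ i, Function.update f j (Lmat * f j) i (v i) (u i)) =
        (∑ t, Lmat (v j) t * f j t (u j)) * ∏ i ∈ Finset.univ.erase j, f i (v i) (u i) := by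
    intro u
    rw [← Finset.mul_prod_erase Finset.univ _ (Finset.mem_univ j)]
    congr 1
    · rw [Function.update_self, Matrix.mul_apply]
    · exact Finset.prod_congr rfl fun i hi => by
        rw [Function.update_of_ne (Finset.ne_of_mem_erase hi)]
  calc (∑ t : Fin 4, Lmat (v j) t *
        ∑ u : Fin d → Fin 4, (∏ i, f i (Function.update v j t i) (u i)) * w u)
      = ∑ t : Fin 4, ∑ u : Fin d → Fin 4, Lmat (v j) t *
          ((f j t (u j) * ∏ i ∈ Finset.univ.erase j, f i (v i) (u i)) * w u) := by
        refine Finset.sum_congr rfl fun t _ => ?_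
        rw [Finset.mul_sum]
        exact Finset.sum_congr rfl fun u _ => by rw [hprod t u]
    _ = ∑ u : Fin d → Fin 4, ∑ t : Fin 4, Lmat (v j) t *
          ((f j t (u j) * ∏ i ∈ Finset.univ.erase j, f i (v i) (u i)) * w u) :=
        Finset.sum_comm
    _ = ∑ u : Fin d → Fin 4,
          (∏ i, Function.update f j (Lmat * f j) i (v i) (u i)) * w u := by
        refine Finset.sum_congr rfl fun u _ => ?_
        rw [hupd u, Finset.sum_mul, Finset.sum_mul]
        exact Finset.sum_congr rfl fun t _ => by ring

lemma kron_one {d : ℕ} : Kron (fun _ : Fin d => (1 : Matrix (Fin 4) (Fin 4) ℝ)) = 1 := by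
  funext v u
  show (∏ j, (1 : Matrix (Fin 4) (Fin 4) ℝ) (v j) (u j)) = (1 : Matrix _ _ ℝ) v u
  by_cases h : v = u
  · subst h; simp [Matrix.one_apply]
  · obtain ⟨j, hj⟩ := Function.ne_iff.mp h
    rw [Matrix.one_apply_ne h]
    exact Finset.prod_eq_zero (Finset.mem_univ j) (Matrix.one_apply_ne hj)

lemma foldl_kron {d : ℕ} (l : List (Fin d)) (f : Fin d → Matrix (Fin 4) (Fin 4) ℝ)
    (w : (Fin d → Fin 4) → ℝ) :
    l.foldl (fun acc j => applyAlongR j acc) ((Kron f).mulVec w) =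
      (Kron (l.foldl (fun g j => Function.update g j (Lmat * g j)) f)).mulVec w := by
  induction l generalizing f with
  | nil => rfl
  | cons j l ih =>
    simp only [List.foldl_cons, kron_step]
    exact ih _

lemma foldl_upd {d : ℕ} (l : List (Fin d)) (hl : l.Nodup)
    (f : Fin d → Matrix (Fin 4) (Fin 4) ℝ) (hf : ∀ j ∈ l, f j = 1) :
    l.foldl (fun g j => Function.update g j (Lmat * g j)) f =
      fun i => if i ∈ l then Lmat else f i := by
  induction l generalizing f with
  | nil => simp
  | cons j l ih =>
    obtain ⟨hjl, hl'⟩ := List.nodup_cons.mp hl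
    have hfj : f j = 1 := hf j (List.mem_cons_self)
    simp only [List.foldl_cons]
    rw [hfj, Matrix.mul_one]
    rw [ih hl' _ (fun i hi => by
      have hij : i ≠ j := fun h => hjl (h ▸ hi)
      rw [Function.update_of_ne hij]
      exact hf i (List.mem_cons_of_mem _ hi))]
    funext i
    by_cases hi : i ∈ l
    · simp [hi, List.mem_cons]
    · by_cases hij : i = j
      · subst hij; simp [hi]
      · simp [hi, hij, Function.update_of_ne hij]

lemma lmatD_mulVec {d : ℕ} (w : (Fin d → Fin 4) → ℝ) :
    (LmatD d).mulVec w =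
      (List.finRange d).foldl (fun acc j => applyAlongR j acc) w := by
  conv_rhs => rw [show w = (Kron (fun _ : Fin d => (1 : Matrix (Fin 4) (Fin 4) ℝ))).mulVec w by
    rw [kron_one, Matrix.one_mulVec]]
  rw [foldl_kron, foldl_upd (List.finRange d) (List.nodup_finRange d) _ (fun _ _ => rfl)]
  have h : (fun i : Fin d => if i ∈ List.finRange d then Lmat else (1 : Matrix (Fin 4) (Fin 4) ℝ))
      = fun _ => Lmat := by
    funext i; simp [List.mem_finRange]
  rw [h]
  rfl

/-- Error bound for the lossy `d`-dimensional forward transform: if `z ∈ ℤ^{4^d}`,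
`z ≠ 0`, and `‖z‖_∞ ≥ 2^{q−1}`, then
`‖L_d·z − 𝐿̃_d(z)‖_∞ ≤ (7/4)·(2^d − 1)·ε_q·‖z‖_∞` with `ε_q = 2^{1−q}`. -/
theorem ltildeD_error (d q : ℕ) (hd : 1 ≤ d) (z : (Fin d → Fin 4) → ℤ) (hz : z ≠ 0)
    (hnorm : (2 : ℝ) ^ ((q : ℤ) - 1) ≤ ‖(fun v => (z v : ℝ))‖) :
    ‖(LmatD d).mulVec (fun v => (z v : ℝ)) - (fun v => ((LtildeD z) v : ℝ))‖ ≤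
      (7 / 4) * ((2 : ℝ) ^ d - 1) * 2 ^ (1 - (q : ℤ)) * ‖(fun v => (z v : ℝ))‖ := by
  set M := ‖(fun v => (z v : ℝ))‖ with hM
  have hMpos : (0 : ℝ) < M := lt_of_lt_of_le (zpow_pos (by norm_num) _) hnorm
  have h2d : (1 : ℝ) ≤ (2 : ℝ) ^ d := one_le_pow₀ (by norm_num)
  have hone : (1 : ℝ) ≤ (2 : ℝ) ^ (1 - (q : ℤ)) * M := by
    have heq : (2 : ℝ) ^ (1 - (q : ℤ)) * (2 : ℝ) ^ ((q : ℤ) - 1) = 1 := by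
      rw [← zpow_add₀ (by norm_num : (2 : ℝ) ≠ 0)]; norm_num
    calc (1 : ℝ) = (2 : ℝ) ^ (1 - (q : ℤ)) * (2 : ℝ) ^ ((q : ℤ) - 1) := heq.symm
      _ ≤ (2 : ℝ) ^ (1 - (q : ℤ)) * M :=
          mul_le_mul_of_nonneg_left hnorm (le_of_lt (zpow_pos (by norm_num) _))
  have hdle : (d : ℝ) ≤ (2 : ℝ) ^ d - 1 := by
    have h := Nat.lt_two_pow_self (n := d)
    have h' : (d : ℝ) + 1 ≤ ((2 ^ d : ℕ) : ℝ) := by exact_mod_cast h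
    push_cast at h'
    linarith
  have hB : (0 : ℝ) ≤ 7 / 4 * ((2 : ℝ) ^ d - 1) * 2 ^ (1 - (q : ℤ)) * M := by
    have : (0 : ℝ) ≤ 7 / 4 * ((2 : ℝ) ^ d - 1) := by linarith
    have h2 : (0 : ℝ) ≤ (2 : ℝ) ^ (1 - (q : ℤ)) * M :=
      le_trans zero_le_one hone
    nlinarith
  rw [pi_norm_le_iff_of_nonneg hB]
  intro v
  rw [Pi.sub_apply, Real.norm_eq_abs]
  have key : |(LmatD d).mulVec (fun v => (z v : ℝ)) v - ((LtildeD z) v : ℝ)| ≤ 7 / 4 * d := by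
    rw [lmatD_mulVec]
    have h := foldl_err (List.finRange d) z v
    rw [List.length_finRange] at h
    exact h
  calc |(LmatD d).mulVec (fun v => (z v : ℝ)) v - ((LtildeD z) v : ℝ)| ≤ 7 / 4 * d := key
    _ ≤ 7 / 4 * ((2 : ℝ) ^ d - 1) := by linarith
    _ ≤ 7 / 4 * ((2 : ℝ) ^ d - 1) * ((2 : ℝ) ^ (1 - (q : ℤ)) * M) :=
        le_mul_of_one_le_right (by linarith) hone
    _ = 7 / 4 * ((2 : ℝ) ^ d - 1) * 2 ^ (1 - (q : ℤ)) * M := by ring
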